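/- Under the structural assumptions and the current-conservation identity, Σ_{m} |J m|⁻¹ · Σ_{n} (J n) · |α⁺ m n|² = n₊ − n₋, where n₊ is the number of indices m with J m > 0 and n₋ is the number of indices m with J m < 0 (the equality holding in ℝ with natural numbers cast to ℝ). -/

import Mathlib

open Matrix Finset

/-- Under the outgoing-scattering structural assumptions and current conservation,
`Σ_m |J m|⁻¹ Σ_n (J n) |α⁺ m n|² = n₊ − n₋`, where `n₊` (resp. `n₋`) is the number of
modes with positive (resp. negative) current. -/
theorem current_observable_eq_mode_asymmetry
    (M : ℕ) (J : Fin M → ℝ) (hJ : ∀ m, J m ≠ 0)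
    (A B : Matrix (Fin M) (Fin M) ℂ)  -- A = α⁺, B = α⁻
    (hpos : ∀ m, 0 < J m →
      B m m = 1 ∧ (∀ n, n ≠ m → 0 < J n → B m n = 0) ∧ (∀ n, J n < 0 → A m n = 0))
    (hneg : ∀ m, J m < 0 →
      A m m = 1 ∧ (∀ n, n ≠ m → J n < 0 → A m n = 0) ∧ (∀ n, 0 < J n → B m n = 0))
    (hcons : ∀ m n : Fin M,
      ∑ k, (J k : ℂ) * A m k * (starRingEnd ℂ) (A n k)
        = ∑ k, (J k : ℂ) * B m k * (starRingEnd ℂ) (B n k)) :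
    ∑ m, |J m|⁻¹ * ∑ n, J n * ‖A m n‖ ^ 2
      = ((Finset.univ.filter fun m : Fin M => 0 < J m).card : ℝ)
        - ((Finset.univ.filter fun m : Fin M => J m < 0).card : ℝ) := by
  classical
  have hsign : ∀ k, ¬ 0 < J k → J k < 0 := fun k h => (hJ k).lt_or_gt.resolve_right h
  have habs : ∀ k, (0:ℝ) < |J k| := fun k => abs_pos.mpr (hJ k)
  have hz : ∀ z : ℂ, (starRingEnd ℂ) z * z = ((‖z‖ ^ 2 : ℝ) : ℂ) := by
    intro z; rw [mul_comm, Complex.mul_conj, Complex.normSq_eq_norm_sq]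
  -- pointwise values of B on positive columns and A on negative columns
  have Bval : ∀ m k, 0 < J k → B m k = if 0 < J m ∧ k = m then 1 else 0 := by
    intro m k hk
    by_cases hm : 0 < J m
    · by_cases hkm : k = m
      · subst hkm; simp [hm, (hpos k hm).1]
      · simp [hkm, (hpos m hm).2.1 k hkm hk]
    · simp [hm, (hneg m (hsign m hm)).2.2 k hk]
  have Aval : ∀ m k, ¬ 0 < J k → A m k = if ¬ 0 < J m ∧ k = m then 1 else 0 := by
    intro m k hk
    have hk' := hsign k hk
    by_cases hm : 0 < J m
    · simp [hm, (hpos m hm).2.2 k hk']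
    · by_cases hkm : k = m
      · subst hkm; simp [hm, (hneg k (hsign k hm)).1]
      · simp [hkm, (hneg m (hsign m hm)).2.1 k hkm hk']
  set C : Matrix (Fin M) (Fin M) ℂ := fun m k => if 0 < J k then A m k else B m k with hCdef
  -- key orthogonality
  have key : ∀ m n : Fin M,
      ∑ k, ((|J k| : ℝ) : ℂ) * C m k * (starRingEnd ℂ) (C n k)
        = if m = n then ((|J m| : ℝ) : ℂ) else 0 := by
    intro m n
    have hsplit : ∀ (X : Matrix (Fin M) (Fin M) ℂ),
        ∑ k, (J k : ℂ) * X m k * (starRingEnd ℂ) (X n k)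
          = ∑ k ∈ univ.filter (fun k => 0 < J k), (J k : ℂ) * X m k * (starRingEnd ℂ) (X n k)
            + ∑ k ∈ univ.filter (fun k => ¬ 0 < J k), (J k : ℂ) * X m k * (starRingEnd ℂ) (X n k) :=
      fun X => (Finset.sum_filter_add_sum_filter_not univ _ _).symm
    have hBpos : ∑ k ∈ univ.filter (fun k => 0 < J k),
        (J k : ℂ) * B m k * (starRingEnd ℂ) (B n k)
          = if m = n ∧ 0 < J m then (J m : ℂ) else 0 := by
      have e : ∀ k ∈ univ.filter (fun k => 0 < J k),
          (J k : ℂ) * B m k * (starRingEnd ℂ) (B n k)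
            = if k = m then (if m = n ∧ 0 < J m then (J m : ℂ) else 0) else 0 := by
        intro k hk
        have hk' : 0 < J k := (Finset.mem_filter.mp hk).2
        rw [Bval m k hk', Bval n k hk']
        by_cases hkm : k = m
        · subst hkm
          by_cases hmn : k = n
          · subst hmn; by_cases h : 0 < J k <;> simp [h]
          · simp [hmn, fun h : 0 < J n ∧ k = n => hmn h.2]
        · simp [hkm, fun h : 0 < J m ∧ k = m => hkm h.2]
      rw [Finset.sum_congr rfl e, Finset.sum_ite_eq']
      by_cases hm : 0 < J m <;> simp [hm]
    have hAneg : ∑ k ∈ univ.filter (fun k => ¬ 0 < J k),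
        (J k : ℂ) * A m k * (starRingEnd ℂ) (A n k)
          = if m = n ∧ ¬ 0 < J m then (J m : ℂ) else 0 := by
      have e : ∀ k ∈ univ.filter (fun k => ¬ 0 < J k),
          (J k : ℂ) * A m k * (starRingEnd ℂ) (A n k)
            = if k = m then (if m = n ∧ ¬ 0 < J m then (J m : ℂ) else 0) else 0 := by
        intro k hk
        have hk' : ¬ 0 < J k := (Finset.mem_filter.mp hk).2
        rw [Aval m k hk', Aval n k hk']
        by_cases hkm : k = m
        · subst hkm
          by_cases hmn : k = n
          · subst hmn; by_cases h : 0 < J k <;> simp [h]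
          · simp [hmn, fun h : ¬ 0 < J n ∧ k = n => hmn h.2]
        · simp [hkm, fun h : ¬ 0 < J m ∧ k = m => hkm h.2]
      rw [Finset.sum_congr rfl e, Finset.sum_ite_eq']
      by_cases hm : 0 < J m <;> simp [hm]
    -- rewrite LHS as P(A) - N(B)
    have hL : ∑ k, ((|J k| : ℝ) : ℂ) * C m k * (starRingEnd ℂ) (C n k)
        = ∑ k ∈ univ.filter (fun k => 0 < J k), (J k : ℂ) * A m k * (starRingEnd ℂ) (A n k)
          - ∑ k ∈ univ.filter (fun k => ¬ 0 < J k), (J k : ℂ) * B m k * (starRingEnd ℂ) (B n k) := by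
      rw [← Finset.sum_filter_add_sum_filter_not univ (fun k => 0 < J k)
        (fun k => ((|J k| : ℝ) : ℂ) * C m k * (starRingEnd ℂ) (C n k))]
      rw [sub_eq_add_neg, ← Finset.sum_neg_distrib]
      congr 1
      · refine Finset.sum_congr rfl (fun k hk => ?_)
        have hk' : 0 < J k := (Finset.mem_filter.mp hk).2
        simp [hCdef, hk', abs_of_pos hk']
      · refine Finset.sum_congr rfl (fun k hk => ?_)
        have hk' : ¬ 0 < J k := (Finset.mem_filter.mp hk).2
        have habsk : |J k| = -(J k) := abs_of_neg (hsign k hk')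
        simp [hCdef, hk', habsk]
    rw [hL]
    have hc := hcons m n
    rw [hsplit A, hsplit B] at hc
    have hrearr : ∑ k ∈ univ.filter (fun k => 0 < J k), (J k : ℂ) * A m k * (starRingEnd ℂ) (A n k)
          - ∑ k ∈ univ.filter (fun k => ¬ 0 < J k), (J k : ℂ) * B m k * (starRingEnd ℂ) (B n k)
        = ∑ k ∈ univ.filter (fun k => 0 < J k), (J k : ℂ) * B m k * (starRingEnd ℂ) (B n k)
          - ∑ k ∈ univ.filter (fun k => ¬ 0 < J k), (J k : ℂ) * A m k * (starRingEnd ℂ) (A n k) := by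
      linear_combination hc
    rw [hrearr, hBpos, hAneg]
    by_cases hmn : m = n
    · subst hmn
      by_cases hm : 0 < J m
      · simp [hm, abs_of_pos hm]
      · have := hsign m hm
        simp [hm, abs_of_neg this]
    · simp [hmn]
  -- the scaled scattering matrix
  set S : Matrix (Fin M) (Fin M) ℂ :=
    fun m k => ((Real.sqrt |J k| * (Real.sqrt |J m|)⁻¹ : ℝ) : ℂ) * C m k with hSdef
  have hsq : ∀ k, (Real.sqrt |J k|) * (Real.sqrt |J k|) = |J k| :=
    fun k => Real.mul_self_sqrt (abs_nonneg _)
  have hsqpos : ∀ k, (0:ℝ) < Real.sqrt |J k| := fun k => Real.sqrt_pos.mpr (habs k)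
  have hSS : S * Sᴴ = 1 := by
    ext m n
    rw [Matrix.mul_apply]
    have e : ∀ k : Fin M, S m k * (Sᴴ) k n
        = (((Real.sqrt |J m|)⁻¹ * (Real.sqrt |J n|)⁻¹ : ℝ) : ℂ)
          * (((|J k| : ℝ) : ℂ) * C m k * (starRingEnd ℂ) (C n k)) := by
      intro k
      have hr : Real.sqrt |J k| * (Real.sqrt |J m|)⁻¹ * (Real.sqrt |J k| * (Real.sqrt |J n|)⁻¹)
          = (Real.sqrt |J m|)⁻¹ * (Real.sqrt |J n|)⁻¹ * |J k| := by
        rw [mul_mul_mul_comm, hsq k]; ring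
      calc S m k * (Sᴴ) k n
          = ((Real.sqrt |J k| * (Real.sqrt |J m|)⁻¹ * (Real.sqrt |J k| * (Real.sqrt |J n|)⁻¹)
              : ℝ) : ℂ) * (C m k * (starRingEnd ℂ) (C n k)) := by
            rw [conjTranspose_apply]
            simp only [hSdef, conjTranspose_apply, star_mul', Complex.star_def,
              Complex.conj_ofReal, Complex.ofReal_mul, Complex.ofReal_inv, map_inv₀]
            ring
        _ = _ := by rw [hr, Complex.ofReal_mul]; ring
    rw [Finset.sum_congr rfl (fun k _ => e k), ← Finset.mul_sum, key m n]
    by_cases hmn : m = n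
    · subst hmn
      rw [if_pos rfl, Matrix.one_apply_eq]
      norm_cast
      rw [← mul_inv, hsq m]
      exact inv_mul_cancel₀ (habs m).ne'
    · rw [if_neg hmn, Matrix.one_apply_ne hmn, mul_zero]
  have hS'S : Sᴴ * S = 1 := mul_eq_one_comm.mp hSS
  -- column normalization
  have col : ∀ k, ∑ m, |J k| * |J m|⁻¹ * ‖C m k‖ ^ 2 = 1 := by
    intro k
    have h1 : (Sᴴ * S) k k = 1 := by rw [hS'S]; simp
    rw [Matrix.mul_apply] at h1
    have h2 : ∀ m : Fin M, (Sᴴ) k m * S m k = ((|J k| * |J m|⁻¹ * ‖C m k‖ ^ 2 : ℝ) : ℂ) := by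
      intro m
      have h3 : Real.sqrt |J k| * (Real.sqrt |J m|)⁻¹ * (Real.sqrt |J k| * (Real.sqrt |J m|)⁻¹)
          = |J k| * |J m|⁻¹ := by
        rw [mul_mul_mul_comm, hsq k, ← mul_inv, hsq m]
      calc (Sᴴ) k m * S m k
          = ((Real.sqrt |J k| * (Real.sqrt |J m|)⁻¹ * (Real.sqrt |J k| * (Real.sqrt |J m|)⁻¹)
              : ℝ) : ℂ) * ((starRingEnd ℂ) (C m k) * C m k) := by
            rw [conjTranspose_apply]
            simp only [hSdef, conjTranspose_apply, star_mul', Complex.star_def,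
              Complex.conj_ofReal, Complex.ofReal_mul, Complex.ofReal_inv, map_inv₀]
            ring
        _ = _ := by rw [h3, hz]; norm_cast
    rw [Finset.sum_congr rfl (fun m _ => h2 m), ← Complex.ofReal_sum] at h1
    exact_mod_cast h1
  -- final computation
  have swap : ∑ m, |J m|⁻¹ * ∑ n, J n * ‖A m n‖ ^ 2
      = ∑ n, ∑ m, |J m|⁻¹ * (J n * ‖A m n‖ ^ 2) := by
    rw [Finset.sum_comm]
    exact Finset.sum_congr rfl (fun m _ => Finset.mul_sum _ _ _)
  rw [swap]
  have inner : ∀ n, ∑ m, |J m|⁻¹ * (J n * ‖A m n‖ ^ 2) = if 0 < J n then 1 else -1 := by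
    intro n
    by_cases hn : 0 < J n
    · rw [if_pos hn, ← col n]
      refine Finset.sum_congr rfl (fun m _ => ?_)
      have hC : C m n = A m n := by simp [hCdef, hn]
      rw [hC, abs_of_pos hn]
      ring
    · rw [if_neg hn]
      have hn' := hsign n hn
      have e : ∀ m : Fin M, |J m|⁻¹ * (J n * ‖A m n‖ ^ 2)
          = if m = n then |J n|⁻¹ * J n else 0 := by
        intro m
        rw [Aval m n hn]
        by_cases hmn : m = n
        · subst hmn; rw [if_pos ⟨hn, rfl⟩, if_pos rfl]; simp
        · rw [if_neg (fun h => hmn h.2.symm), if_neg hmn]; simp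
      rw [Finset.sum_congr rfl (fun m _ => e m), Finset.sum_ite_eq' univ n,
        if_pos (Finset.mem_univ n), abs_of_neg hn', inv_neg, neg_mul,
        inv_mul_cancel₀ (hJ n)]
  rw [Finset.sum_congr rfl (fun n _ => inner n)]
  rw [Finset.sum_ite, Finset.sum_const, Finset.sum_const]
  have hfilt : univ.filter (fun n : Fin M => ¬ 0 < J n) = univ.filter (fun n => J n < 0) := by
    refine Finset.filter_congr (fun k _ => ?_)
    constructor
    · exact fun h => hsign k h
    · exact fun h => not_lt.mpr h.le
  rw [hfilt]
  simp
  ring
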